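/- arXiv:2110.05985 — 2 statements merged into one kernel-verified Lean document; each statement's English description precedes it below -/
import Mathlib

section
/- (Extended Prékopa-Leindler inequality) Let X be a convex space with σ-algebra Σ, p ∈ (0,1), and let μ, ν, ω be σ-finite measures on X such that μ(C) ≥ ν(A)^p ω(B)^{1-p} whenever A, B, C ∈ Σ with C ⊇ A +_p B. Let f, g, h be nonnegative measurable functions on X with f(p·x+(1-p)·y) ≥ g(x)^p h(y)^{1-p} for all x, y ∈ X. Then ∫ f dμ ≥ (∫ g dν)^p (∫ h dω)^{1-p}. -/
open Set MeasureTheory ENNReal Filter Topology Pointwise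

lemma affImage (p c : ℝ) (s : Set ℝ) : (fun x => p*x + c) '' s = c +ᵥ (p • s) := by
  rw [← Set.image_smul, ← Set.image_vadd, Set.image_image]
  simp [smul_eq_mul, add_comm, vadd_eq_add]

lemma volAff (p c : ℝ) (hp : 0 ≤ p) (s : Set ℝ) :
    volume ((fun x => p*x + c) '' s) = ENNReal.ofReal p * volume s := by
  rw [affImage, measure_vadd, Measure.addHaar_smul_of_nonneg volume hp s]; simp

/-- compact one-dimensional Brunn-Minkowski, weighted -/
lemma cBM {p : ℝ} (hp : p ∈ Ioo (0:ℝ) 1) {K L C : Set ℝ}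
    (hK : IsCompact K) (hL : IsCompact L) (hKne : K.Nonempty) (hLne : L.Nonempty)
    (hC : MeasurableSet C) (hsub : ∀ u ∈ K, ∀ v ∈ L, p*u + (1-p)*v ∈ C) :
    ENNReal.ofReal p * volume K + ENNReal.ofReal (1-p) * volume L ≤ volume C := by
  obtain ⟨k, hkK, hkmax⟩ := hK.exists_isGreatest hKne
  obtain ⟨l, hlL, hlmin⟩ := hL.exists_isLeast hLne
  set m := p*k + (1-p)*l with hm
  set S1 : Set ℝ := (fun x => p*x + (1-p)*l) '' K with hS1
  set S2 : Set ℝ := (fun y => (1-p)*y + p*k) '' L with hS2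
  have hS1sub : S1 ⊆ C := by rintro _ ⟨x, hx, rfl⟩; exact hsub x hx l hlL
  have hS2sub : S2 ⊆ C := by
    rintro _ ⟨y, hy, rfl⟩
    have := hsub k hkK y hy; rwa [add_comm] at this
  have hS1le : ∀ z ∈ S1, z ≤ m := by
    rintro _ ⟨x, hx, rfl⟩
    have := hkmax hx
    show p*x + (1-p)*l ≤ m
    nlinarith [hp.1, hp.2]
  have hS2ge : ∀ z ∈ S2, m ≤ z := by
    rintro _ ⟨y, hy, rfl⟩
    have := hlmin hy
    show m ≤ (1-p)*y + p*k
    nlinarith [hp.1, hp.2]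
  have hS1m : MeasurableSet (S1 \ {m}) :=
    ((hK.image (by continuity)).measurableSet).diff (measurableSet_singleton m)
  have hS2m : MeasurableSet S2 := (hL.image (by continuity)).measurableSet
  have hdisj : Disjoint (S1 \ {m}) S2 := by
    rw [Set.disjoint_left]
    rintro z ⟨hz1, hz2⟩ hz3
    exact hz2 (le_antisymm (hS1le z hz1) (hS2ge z hz3))
  calc ENNReal.ofReal p * volume K + ENNReal.ofReal (1-p) * volume L
      = volume S1 + volume S2 := by
        rw [hS1, hS2, volAff _ _ hp.1.le, volAff _ _ (by linarith [hp.2] : (0:ℝ) ≤ 1-p)]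
    _ = volume (S1 \ {m}) + volume S2 := by
        rw [measure_diff_null (measure_singleton m)]
    _ = volume ((S1 \ {m}) ∪ S2) := (measure_union hdisj hS2m).symm
    _ ≤ volume C := measure_mono (union_subset (fun z hz => hS1sub hz.1) hS2sub)

lemma layercake {α : Type*} [MeasurableSpace α] (μ : Measure α) [SigmaFinite μ]
    {f : α → ℝ≥0∞} (hf : Measurable f) :
    ∫⁻ x, f x ∂μ = ∫⁻ t in Ioi (0:ℝ), μ {x | ENNReal.ofReal t < f x} := by
  classical
  set F : ℝ → α → ℝ≥0∞ := fun t x => if ENNReal.ofReal t < f x then 1 else 0 with hF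
  have huncurry : Measurable (Function.uncurry fun (x : α) (t : ℝ) => F t x) := by
    apply Measurable.ite _ measurable_const measurable_const
    exact measurableSet_lt (ENNReal.measurable_ofReal.comp measurable_snd)
      (hf.comp measurable_fst)
  have hslice : ∀ t : ℝ, F t = Set.indicator {x | ENNReal.ofReal t < f x} 1 := by
    intro t; ext x; simp [hF, Set.indicator_apply]
  have hslice2 : ∀ x : α, (fun t => F t x) = Set.indicator {t : ℝ | ENNReal.ofReal t < f x} 1 := by
    intro x; ext t; simp [hF, Set.indicator_apply]
  have inner : ∀ x : α, (∫⁻ t in Ioi (0:ℝ), F t x) = f x := by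
    intro x
    rw [hslice2 x, lintegral_indicator_one
      (measurableSet_lt ENNReal.measurable_ofReal measurable_const)]
    rw [Measure.restrict_apply (measurableSet_lt ENNReal.measurable_ofReal measurable_const)]
    rcases eq_or_ne (f x) ∞ with h | h
    · have : {t : ℝ | ENNReal.ofReal t < f x} ∩ Ioi 0 = Ioi 0 := by
        rw [inter_eq_right]; intro t _; simp [h]
      rw [this, Real.volume_Ioi, h]
    · have : {t : ℝ | ENNReal.ofReal t < f x} ∩ Ioi 0 = Ioo 0 (f x).toReal := by
        ext t
        simp only [mem_inter_iff, mem_setOf_eq, mem_Ioi, mem_Ioo]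
        constructor
        · rintro ⟨h1, h2⟩
          exact ⟨h2, (ENNReal.ofReal_lt_iff_lt_toReal h2.le h).mp h1⟩
        · rintro ⟨h1, h2⟩
          exact ⟨(ENNReal.ofReal_lt_iff_lt_toReal h1.le h).mpr h2, h1⟩
      rw [this, Real.volume_Ioo, sub_zero, ENNReal.ofReal_toReal h]
  calc ∫⁻ x, f x ∂μ = ∫⁻ x, (∫⁻ t in Ioi (0:ℝ), F t x) ∂μ := by
        simp_rw [inner]
    _ = ∫⁻ t in Ioi (0:ℝ), ∫⁻ x, F t x ∂μ := lintegral_lintegral_swap huncurry.aemeasurable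
    _ = ∫⁻ t in Ioi (0:ℝ), μ {x | ENNReal.ofReal t < f x} := by
        refine lintegral_congr fun t => ?_
        rw [hslice t, lintegral_indicator_one
          (measurableSet_lt measurable_const hf)]

lemma lint_image {s : Set ℝ} (hs : MeasurableSet s) {f f' : ℝ → ℝ}
    (hf' : ∀ x ∈ s, HasDerivWithinAt f (f' x) s x) (hinj : InjOn f s) (g : ℝ → ℝ≥0∞) :
    ∫⁻ x in f '' s, g x = ∫⁻ x in s, ENNReal.ofReal |f' x| * g (f x) := by
  have := lintegral_image_eq_lintegral_abs_det_fderiv_mul volume hs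
    (f' := fun x => ContinuousLinearMap.smulRight (1 : ℝ →L[ℝ] ℝ) (f' x))
    (fun x hx => (hf' x hx).hasFDerivWithinAt) hinj g
  simpa [ContinuousLinearMap.smulRight_one_eq_toSpanSingleton, ContinuousLinearMap.det_toSpanSingleton] using this

lemma gm_le_am {p : ℝ} (hp : p ∈ Ioo (0:ℝ) 1) (a b : ℝ≥0∞) :
    a ^ p * b ^ (1-p) ≤ ENNReal.ofReal p * a + ENNReal.ofReal (1-p) * b := by
  have hp1 : (0:ℝ) < 1 - p := by linarith [hp.2]
  rcases eq_or_ne a ∞ with rfl | ha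
  · rw [ENNReal.mul_top (ENNReal.ofReal_pos.mpr hp.1).ne', top_add]; exact le_top
  rcases eq_or_ne b ∞ with rfl | hb
  · rw [ENNReal.mul_top (ENNReal.ofReal_pos.mpr hp1).ne', add_top]; exact le_top
  · rw [← ENNReal.ofReal_toReal ha, ← ENNReal.ofReal_toReal hb,
      ENNReal.ofReal_rpow_of_nonneg ENNReal.toReal_nonneg hp.1.le,
      ENNReal.ofReal_rpow_of_nonneg ENNReal.toReal_nonneg hp1.le,
      ← ENNReal.ofReal_mul (by positivity), ← ENNReal.ofReal_mul hp.1.le,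
      ← ENNReal.ofReal_mul hp1.le, ← ENNReal.ofReal_add (mul_nonneg hp.1.le ENNReal.toReal_nonneg) (mul_nonneg hp1.le ENNReal.toReal_nonneg)]
    exact ENNReal.ofReal_le_ofReal
      (Real.geom_mean_le_arith_mean2_weighted hp.1.le hp1.le ENNReal.toReal_nonneg
        ENNReal.toReal_nonneg (by ring))

lemma rpow_mul_lt {p q : ℝ} (hp : 0 < p) (hq : 0 < q) {X Y a b : ℝ≥0∞}
    (hX0 : X ≠ 0) (hXt : X ≠ ∞) (hY0 : Y ≠ 0) (hYt : Y ≠ ∞)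
    (hXa : X < a) (hYb : Y < b) : X ^ p * Y ^ q < a ^ p * b ^ q := by
  have h1 : X ^ p < a ^ p := ENNReal.rpow_lt_rpow hXa hp
  have h2 : Y ^ q ≤ b ^ q := ENNReal.rpow_le_rpow hYb.le hq.le
  calc X ^ p * Y ^ q < a ^ p * Y ^ q := by
        rw [ENNReal.mul_lt_mul_iff_left (ENNReal.rpow_pos (pos_iff_ne_zero.mpr hY0) hYt).ne'
          (ENNReal.rpow_ne_top_of_nonneg hq.le hYt)]
        exact h1
    _ ≤ a ^ p * b ^ q := mul_le_mul_right h2 _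

lemma iSup_min_nat (c : ℝ≥0∞) : ⨆ n : ℕ, min c n = c := by
  rcases eq_or_ne c ∞ with rfl | hc
  · calc ⨆ n : ℕ, min ⊤ (n:ℝ≥0∞) = ⨆ n : ℕ, (n:ℝ≥0∞) := by
          refine iSup_congr fun n => min_eq_right le_top
      _ = ⊤ := ENNReal.iSup_natCast
  · apply le_antisymm (iSup_le fun n => min_le_left _ _)
    obtain ⟨n, hn⟩ := ENNReal.exists_nat_gt hc
    exact le_trans (le_of_eq (min_eq_left hn.le).symm) (le_iSup (fun n : ℕ => min c n) n)

lemma sup_compact {A : Set ℝ} (hA : MeasurableSet A) {a : ℝ} (ha : a ∈ A) (c : ℝ≥0∞) :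
    c * volume A ≤ ⨆ (K : {K : Set ℝ // K ⊆ A ∧ IsCompact K ∧ K.Nonempty}), c * volume K.1 := by
  rw [hA.measure_eq_iSup_isCompact, ENNReal.mul_iSup]
  refine iSup_le fun K => ?_
  rw [ENNReal.mul_iSup]
  refine iSup_le fun hKA => ?_
  rw [ENNReal.mul_iSup]
  refine iSup_le fun hK => ?_
  calc c * volume K ≤ c * volume (K ∪ {a}) := by
        gcongr; exact subset_union_left
    _ ≤ _ := le_iSup (fun (K : {K : Set ℝ // K ⊆ A ∧ IsCompact K ∧ K.Nonempty}) => c * volume K.1)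
        ⟨K ∪ {a}, union_subset hKA (by simpa using ha), hK.union isCompact_singleton,
          ⟨a, by simp⟩⟩

/-- one-dimensional weighted Brunn-Minkowski for measurable sets -/
lemma wBM {p : ℝ} (hp : p ∈ Ioo (0:ℝ) 1) {A B C : Set ℝ}
    (hA : MeasurableSet A) (hB : MeasurableSet B) (hC : MeasurableSet C)
    (hAne : A.Nonempty) (hBne : B.Nonempty)
    (hsub : ∀ u ∈ A, ∀ v ∈ B, p*u + (1-p)*v ∈ C) :
    ENNReal.ofReal p * volume A + ENNReal.ofReal (1-p) * volume B ≤ volume C := by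
  obtain ⟨a, ha⟩ := hAne
  obtain ⟨b, hb⟩ := hBne
  refine le_trans (add_le_add (sup_compact hA ha _) (sup_compact hB hb _)) ?_
  have : Nonempty {K : Set ℝ // K ⊆ A ∧ IsCompact K ∧ K.Nonempty} :=
    ⟨⟨{a}, by simpa using ha, isCompact_singleton, ⟨a, rfl⟩⟩⟩
  have : Nonempty {K : Set ℝ // K ⊆ B ∧ IsCompact K ∧ K.Nonempty} :=
    ⟨⟨{b}, by simpa using hb, isCompact_singleton, ⟨b, rfl⟩⟩⟩
  refine ENNReal.iSup_add_iSup_le fun K L => ?_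
  exact cBM hp K.2.2.1 L.2.2.1 K.2.2.2 L.2.2.2 hC
    (fun u hu v hv => hsub u (K.2.1 hu) v (L.2.1 hv))

-- substitution on a linear image
lemma subst_lin {c : ℝ} (hc : 0 < c) (F : ℝ → ℝ≥0∞) :
    ∫⁻ s in Ioo (0:ℝ) c, F s = ∫⁻ r in Ioo (0:ℝ) 1, ENNReal.ofReal c * F (c*r) := by
  have himg : (fun r => c*r) '' Ioo (0:ℝ) 1 = Ioo 0 c := by
    rw [show (fun r => c*r) = (c * ·) from rfl, image_mul_left_Ioo hc]; simp
  rw [← himg, lint_image measurableSet_Ioo (f' := fun _ => c)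
    (fun x _ => by simpa using ((hasDerivAt_id x).const_mul c).hasDerivWithinAt)
    ((mul_right_injective₀ hc.ne').injOn) F]
  simp [abs_of_pos hc]

lemma onedimPL_bounded {p : ℝ} (hp : p ∈ Ioo (0:ℝ) 1) {φ γ η : ℝ → ℝ≥0∞}
    (hφ : Measurable φ) (hγ : Measurable γ) (hη : Measurable η)
    (hMg : essSup γ volume ≠ ∞) (hMh : essSup η volume ≠ ∞)
    (hpl : ∀ u v : ℝ, γ u ^ p * η v ^ (1-p) ≤ φ (p*u + (1-p)*v)) :
    (∫⁻ u, γ u) ^ p * (∫⁻ v, η v) ^ (1-p) ≤ ∫⁻ u, φ u := by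
  have hp1 : (0:ℝ) < 1 - p := by linarith [hp.2]
  rcases eq_or_ne (∫⁻ u, γ u) 0 with h0 | hIg0
  · rw [h0, ENNReal.zero_rpow_of_pos hp.1, zero_mul]; exact zero_le
  rcases eq_or_ne (∫⁻ v, η v) 0 with h0 | hIh0
  · rw [h0, ENNReal.zero_rpow_of_pos hp1, mul_zero]; exact zero_le
  have ess_pos : ∀ {f : ℝ → ℝ≥0∞}, (∫⁻ u, f u) ≠ 0 → essSup f volume ≠ 0 := by
    intro f hI h
    apply hI
    have hle : f ≤ᵐ[volume] fun _ => (0:ℝ≥0∞) := by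
      filter_upwards [ae_le_essSup f] with x hx using by rwa [h] at hx
    refine le_antisymm ?_ zero_le
    calc ∫⁻ u, f u ≤ ∫⁻ _u, (0:ℝ≥0∞) := lintegral_mono_ae hle
      _ = 0 := lintegral_zero
  have hMg0 : essSup γ volume ≠ 0 := ess_pos hIg0
  have hMh0 : essSup η volume ≠ 0 := ess_pos hIh0
  set mg := (essSup γ volume).toReal with hmgdef
  set mh := (essSup η volume).toReal with hmhdef
  have hmg : 0 < mg := ENNReal.toReal_pos hMg0 hMg
  have hmh : 0 < mh := ENNReal.toReal_pos hMh0 hMh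
  have hmgS : ENNReal.ofReal mg = essSup γ volume := ENNReal.ofReal_toReal hMg
  have hmhS : ENNReal.ofReal mh = essSup η volume := ENNReal.ofReal_toReal hMh
  set M := mg ^ p * mh ^ (1-p) with hMdef
  have hM : 0 < M := by positivity
  set G : ℝ → ℝ≥0∞ := fun s => volume {u | ENNReal.ofReal s < γ u} with hGdef
  set H : ℝ → ℝ≥0∞ := fun s => volume {v | ENNReal.ofReal s < η v} with hHdef
  set Φ : ℝ → ℝ≥0∞ := fun s => volume {w | ENNReal.ofReal s < φ w} with hΦdef
  have hGanti : Antitone G := fun s t hst => measure_mono fun u hu =>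
    lt_of_le_of_lt (ENNReal.ofReal_le_ofReal hst) hu
  have hHanti : Antitone H := fun s t hst => measure_mono fun u hu =>
    lt_of_le_of_lt (ENNReal.ofReal_le_ofReal hst) hu
  have hΦanti : Antitone Φ := fun s t hst => measure_mono fun u hu =>
    lt_of_le_of_lt (ENNReal.ofReal_le_ofReal hst) hu
  -- truncated layer cake
  have trunc : ∀ (f : ℝ → ℝ≥0∞), Measurable f → ∀ {m : ℝ}, 0 < m →
      ENNReal.ofReal m = essSup f volume →
      ∫⁻ u, f u = ∫⁻ s in Ioo 0 m, volume {u | ENNReal.ofReal s < f u} := by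
    intro f hf m hm hS
    rw [layercake volume hf]
    have hsplit : Ioi (0:ℝ) = Ioo 0 m ∪ Ici m := by
      ext s
      simp only [mem_Ioi, mem_union, mem_Ioo, mem_Ici]
      constructor
      · intro h; rcases lt_or_ge s m with h2 | h2
        · exact Or.inl ⟨h, h2⟩
        · exact Or.inr h2
      · rintro (⟨h, _⟩ | h); exacts [h, lt_of_lt_of_le hm h]
    have hnull : volume {u | essSup f volume < f u} = 0 := by
      have := ae_le_essSup f (μ := volume)
      rw [ae_iff] at this
      simpa [not_le] using this
    have hzero : ∀ s ∈ Ici m, volume {u | ENNReal.ofReal s < f u} = 0 := by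
      intro s hs
      refine measure_mono_null (fun u hu => ?_) hnull
      exact lt_of_le_of_lt (hS ▸ ENNReal.ofReal_le_ofReal hs) hu
    rw [hsplit, lintegral_union measurableSet_Ici
      (by rw [Set.disjoint_left]; rintro s ⟨_, h1⟩ h2; exact absurd h2 (not_le.mpr h1))]
    have : ∫⁻ s in Ici m, volume {u | ENNReal.ofReal s < f u} = 0 := by
      calc ∫⁻ s in Ici m, volume {u | ENNReal.ofReal s < f u}
          = ∫⁻ _s in Ici m, 0 :=
            setLIntegral_congr_fun measurableSet_Ici (fun s hs => hzero s hs)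
        _ = 0 := by simp
    rw [this, add_zero]
  have layerγ : ∫⁻ u, γ u = ∫⁻ r in Ioo (0:ℝ) 1, ENNReal.ofReal mg * G (mg*r) := by
    rw [trunc γ hγ hmg hmgS, subst_lin hmg]
  have layerη : ∫⁻ v, η v = ∫⁻ r in Ioo (0:ℝ) 1, ENNReal.ofReal mh * H (mh*r) := by
    rw [trunc η hη hmh hmhS, subst_lin hmh]
  have hGm : Measurable fun r : ℝ => G (mg*r) :=
    hGanti.measurable.comp (measurable_const_mul mg)
  have hHm : Measurable fun r : ℝ => H (mh*r) :=
    hHanti.measurable.comp (measurable_const_mul mh)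
  have hΦm : Measurable fun r : ℝ => Φ (M*r) :=
    hΦanti.measurable.comp (measurable_const_mul M)
  set Xg := ∫⁻ r in Ioo (0:ℝ) 1, G (mg*r) with hXgdef
  set Xh := ∫⁻ r in Ioo (0:ℝ) 1, H (mh*r) with hXhdef
  have layerγ2 : ∫⁻ u, γ u = ENNReal.ofReal mg * Xg := by
    rw [layerγ, lintegral_const_mul _ hGm]
  have layerη2 : ∫⁻ v, η v = ENNReal.ofReal mh * Xh := by
    rw [layerη, lintegral_const_mul _ hHm]
  -- pointwise Brunn-Minkowski bound
  have nept : ∀ (f : ℝ → ℝ≥0∞) (m : ℝ), 0 < m → ENNReal.ofReal m = essSup f volume →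
      ∀ r ∈ Ioo (0:ℝ) 1, {u | ENNReal.ofReal (m*r) < f u}.Nonempty := by
    intro f m hm hS r hr
    apply nonempty_of_measure_ne_zero
    intro hz
    have hae : ∀ᵐ u ∂(volume : Measure ℝ), f u ≤ ENNReal.ofReal (m*r) := by
      rw [ae_iff]; simpa [not_le] using hz
    have h1 : essSup f volume ≤ ENNReal.ofReal (m*r) := essSup_le_of_ae_le _ hae
    rw [← hS] at h1
    have h2 : ENNReal.ofReal (m*r) < ENNReal.ofReal m := by
      rw [ENNReal.ofReal_lt_ofReal_iff hm]
      nlinarith [hr.1, hr.2]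
    exact absurd (h1.trans_lt h2) (lt_irrefl _)
  have key : ∀ r ∈ Ioo (0:ℝ) 1,
      ENNReal.ofReal p * G (mg*r) + ENNReal.ofReal (1-p) * H (mh*r) ≤ Φ (M*r) := by
    intro r hr
    refine wBM hp (measurableSet_lt measurable_const hγ) (measurableSet_lt measurable_const hη)
      (measurableSet_lt measurable_const hφ) (nept γ mg hmg hmgS r hr)
      (nept η mh hmh hmhS r hr) ?_
    have hr0 : 0 < r := hr.1
    intro u hu v hv
    show ENNReal.ofReal (M*r) < φ (p*u + (1-p)*v)
    refine lt_of_lt_of_le ?_ (hpl u v)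
    have heq : ENNReal.ofReal (M*r)
        = ENNReal.ofReal (mg*r) ^ p * ENNReal.ofReal (mh*r) ^ (1-p) := by
      rw [ENNReal.ofReal_rpow_of_pos (mul_pos hmg hr0), ENNReal.ofReal_rpow_of_pos (mul_pos hmh hr0),
        ← ENNReal.ofReal_mul (Real.rpow_nonneg (mul_pos hmg hr0).le p)]
      congr 1
      rw [Real.mul_rpow hmg.le hr.1.le, Real.mul_rpow hmh.le hr.1.le]
      have hr1 : r ^ p * r ^ (1-p) = r := by
        rw [← Real.rpow_add hr.1]; norm_num
      calc M * r = mg ^ p * mh ^ (1-p) * (r ^ p * r ^ (1-p)) := by rw [hr1, hMdef]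
        _ = mg ^ p * r ^ p * (mh ^ (1-p) * r ^ (1-p)) := by ring
    rw [heq]
    exact rpow_mul_lt hp.1 hp1 (ENNReal.ofReal_pos.mpr (mul_pos hmg hr0)).ne'
      ENNReal.ofReal_ne_top (ENNReal.ofReal_pos.mpr (mul_pos hmh hr0)).ne'
      ENNReal.ofReal_ne_top hu hv
  -- assemble
  calc (∫⁻ u, γ u) ^ p * (∫⁻ v, η v) ^ (1-p)
      = (ENNReal.ofReal mg * Xg) ^ p * (ENNReal.ofReal mh * Xh) ^ (1-p) := by
        rw [layerγ2, layerη2]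
    _ = ENNReal.ofReal M * (Xg ^ p * Xh ^ (1-p)) := by
        rw [ENNReal.mul_rpow_of_nonneg _ _ hp.1.le, ENNReal.mul_rpow_of_nonneg _ _ hp1.le,
          hMdef, ENNReal.ofReal_mul (by positivity),
          ← ENNReal.ofReal_rpow_of_pos hmg, ← ENNReal.ofReal_rpow_of_pos hmh]
        ring
    _ ≤ ENNReal.ofReal M * (ENNReal.ofReal p * Xg + ENNReal.ofReal (1-p) * Xh) :=
        mul_le_mul_right (gm_le_am hp _ _) _
    _ = ∫⁻ r in Ioo (0:ℝ) 1, ENNReal.ofReal M *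
          (ENNReal.ofReal p * G (mg*r) + ENNReal.ofReal (1-p) * H (mh*r)) := by
        rw [lintegral_const_mul _ (f := fun r => ENNReal.ofReal p * G (mg*r) + ENNReal.ofReal (1-p) * H (mh*r)) ((hGm.const_mul _).add (hHm.const_mul _)),
          lintegral_add_left (hGm.const_mul _), lintegral_const_mul _ hGm,
          lintegral_const_mul _ hHm]
    _ ≤ ∫⁻ r in Ioo (0:ℝ) 1, ENNReal.ofReal M * Φ (M*r) :=
        setLIntegral_mono (hΦm.const_mul _) (fun r hr => mul_le_mul_right (key r hr) _)
    _ = ∫⁻ s in Ioo (0:ℝ) M, Φ s := (subst_lin hM Φ).symm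
    _ ≤ ∫⁻ s in Ioi (0:ℝ), Φ s := lintegral_mono_set (fun s hs => hs.1)
    _ = ∫⁻ w, φ w := (layercake volume hφ).symm

lemma onedimPL {p : ℝ} (hp : p ∈ Ioo (0:ℝ) 1) {φ γ η : ℝ → ℝ≥0∞}
    (hφ : Measurable φ) (hγ : Measurable γ) (hη : Measurable η)
    (hpl : ∀ u v : ℝ, γ u ^ p * η v ^ (1-p) ≤ φ (p*u + (1-p)*v)) :
    (∫⁻ u, γ u) ^ p * (∫⁻ v, η v) ^ (1-p) ≤ ∫⁻ u, φ u := by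
  have hp1 : (0:ℝ) < 1 - p := by linarith [hp.2]
  rcases eq_or_ne (∫⁻ u, γ u) 0 with h0 | hIg0
  · rw [h0, ENNReal.zero_rpow_of_pos hp.1, zero_mul]; exact zero_le
  rcases eq_or_ne (∫⁻ v, η v) 0 with h0 | hIh0
  · rw [h0, ENNReal.zero_rpow_of_pos hp1, mul_zero]; exact zero_le
  have hbdd : ∀ (f : ℝ → ℝ≥0∞) (n : ℕ), essSup (fun u => min (f u) n) volume ≠ ∞ :=
    fun f n => ne_top_of_le_ne_top (ENNReal.natCast_ne_top n)
      (essSup_le_of_ae_le _ (Filter.Eventually.of_forall fun u => min_le_right _ _))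
  have key : ∀ n : ℕ, (∫⁻ u, min (γ u) n) ^ p * (∫⁻ v, min (η v) n) ^ (1-p) ≤ ∫⁻ u, φ u := by
    intro n
    refine onedimPL_bounded hp hφ (hγ.min measurable_const) (hη.min measurable_const)
      (hbdd γ n) (hbdd η n) ?_
    intro u v
    refine le_trans (mul_le_mul' (ENNReal.rpow_le_rpow (min_le_left _ _) hp.1.le)
      (ENNReal.rpow_le_rpow (min_le_left _ _) hp1.le)) (hpl u v)
  have lim : ∀ (f : ℝ → ℝ≥0∞), Measurable f →
      Tendsto (fun n : ℕ => ∫⁻ u, min (f u) n) atTop (𝓝 (∫⁻ u, f u)) := by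
    intro f hf
    have hmono : ∀ u, Monotone fun n : ℕ => min (f u) n := fun u m n h =>
      min_le_min le_rfl (Nat.cast_le.mpr h)
    have : (∫⁻ u, f u) = ⨆ n : ℕ, ∫⁻ u, min (f u) n := by
      rw [← lintegral_iSup (fun n => hf.min measurable_const) (fun m n h u => hmono u h)]
      congr 1 with u
      exact (iSup_min_nat (f u)).symm
    rw [this]
    exact tendsto_atTop_iSup fun m n h => lintegral_mono fun u => hmono u h
  have hne : ∀ {a : ℝ≥0∞} {q : ℝ}, a ≠ 0 → 0 < q → a ^ q ≠ 0 := by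
    intro a q ha hq
    simp [ENNReal.rpow_eq_zero_iff, ha, hq, not_lt.mpr hq.le]
  have lmul : Tendsto (fun n : ℕ => (∫⁻ u, min (γ u) n) ^ p * (∫⁻ v, min (η v) n) ^ (1-p))
      atTop (𝓝 ((∫⁻ u, γ u) ^ p * (∫⁻ v, η v) ^ (1-p))) := by
    refine ENNReal.Tendsto.mul
      ((ENNReal.continuous_rpow_const.tendsto _).comp (lim γ hγ))
      (Or.inl (hne hIg0 hp.1))
      ((ENNReal.continuous_rpow_const.tendsto _).comp (lim η hη))
      (Or.inl (hne hIh0 hp1))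
  exact le_of_tendsto lmul (Filter.Eventually.of_forall key)


/-- Extended Prékopa–Leindler inequality for log-concave-type measures on a
convex space. -/
theorem extended_prekopa_leindler
    {E : Type*} [AddCommGroup E] [Module ℝ E] [MeasurableSpace E]
    (p : ℝ) (hp : p ∈ Ioo (0:ℝ) 1)
    (μ ν ω : Measure E) [SigmaFinite μ] [SigmaFinite ν] [SigmaFinite ω]
    (hmeas : ∀ A B C : Set E, MeasurableSet A → MeasurableSet B → MeasurableSet C →
      {z | ∃ a ∈ A, ∃ b ∈ B, z = p • a + (1 - p) • b} ⊆ C →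
      μ C ≥ ν A ^ p * ω B ^ (1 - p))
    (f g h : E → ℝ≥0∞) (hf : Measurable f) (hg : Measurable g) (hh : Measurable h)
    (hpl : ∀ x y : E, f (p • x + (1 - p) • y) ≥ g x ^ p * h y ^ (1 - p)) :
    ∫⁻ x, f x ∂μ ≥ (∫⁻ x, g x ∂ν) ^ p * (∫⁻ x, h x ∂ω) ^ (1 - p) := by
  have hp1 : (0:ℝ) < 1 - p := by linarith [hp.2]
  -- representation via exponential layer functions
  have repr : ∀ (m : Measure E), SigmaFinite m → ∀ (k : E → ℝ≥0∞), Measurable k →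
      ∫⁻ x, k x ∂m = ∫⁻ u, ENNReal.ofReal (Real.exp u)
        * m {x | ENNReal.ofReal (Real.exp u) < k x} := by
    intro m _ k hk
    rw [layercake m hk]
    have himg : Ioi (0:ℝ) = Real.exp '' univ := by rw [image_univ, Real.range_exp]
    rw [himg, lint_image MeasurableSet.univ (f' := Real.exp)
      (fun x _ => (Real.hasDerivAt_exp x).hasDerivWithinAt) Real.exp_injective.injOn _,
      Measure.restrict_univ]
    refine lintegral_congr fun u => ?_
    rw [abs_of_pos (Real.exp_pos u)]
  have hmeaslt : ∀ {k : E → ℝ≥0∞}, Measurable k → ∀ (m : Measure E),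
      Measurable fun u : ℝ => m {x | ENNReal.ofReal (Real.exp u) < k x} := by
    intro k hk m
    have h1 : Measurable fun s : ℝ => m {x | ENNReal.ofReal s < k x} :=
      Antitone.measurable fun s t hst => measure_mono fun x hx =>
        lt_of_le_of_lt (ENNReal.ofReal_le_ofReal hst) hx
    exact h1.comp Real.measurable_exp
  have hexp : ∀ u : ℝ, Measurable fun x : E => x -- dummy
      := fun _ => measurable_id
  -- the three layer functions
  set φ : ℝ → ℝ≥0∞ := fun u => ENNReal.ofReal (Real.exp u)
    * μ {x | ENNReal.ofReal (Real.exp u) < f x} with hφdef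
  set γ : ℝ → ℝ≥0∞ := fun u => ENNReal.ofReal (Real.exp u)
    * ν {x | ENNReal.ofReal (Real.exp u) < g x} with hγdef
  set η : ℝ → ℝ≥0∞ := fun u => ENNReal.ofReal (Real.exp u)
    * ω {x | ENNReal.ofReal (Real.exp u) < h x} with hηdef
  have hφm : Measurable φ :=
    ((ENNReal.measurable_ofReal.comp Real.measurable_exp).mul (hmeaslt hf μ))
  have hγm : Measurable γ :=
    ((ENNReal.measurable_ofReal.comp Real.measurable_exp).mul (hmeaslt hg ν))
  have hηm : Measurable η :=
    ((ENNReal.measurable_ofReal.comp Real.measurable_exp).mul (hmeaslt hh ω))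
  have expkey : ∀ u v : ℝ, ENNReal.ofReal (Real.exp (p*u + (1-p)*v))
      = ENNReal.ofReal (Real.exp u) ^ p * ENNReal.ofReal (Real.exp v) ^ (1-p) := by
    intro u v
    rw [ENNReal.ofReal_rpow_of_pos (Real.exp_pos u), ENNReal.ofReal_rpow_of_pos (Real.exp_pos v),
      ← ENNReal.ofReal_mul (Real.rpow_nonneg (Real.exp_pos u).le p), ← Real.exp_mul,
      ← Real.exp_mul, ← Real.exp_add]
    ring_nf
  have hplR : ∀ u v : ℝ, γ u ^ p * η v ^ (1-p) ≤ φ (p*u + (1-p)*v) := by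
    intro u v
    set X := ENNReal.ofReal (Real.exp u) with hX
    set Y := ENNReal.ofReal (Real.exp v) with hY
    set A := {x : E | X < g x} with hA
    set B := {x : E | Y < h x} with hB
    set C := {z : E | ENNReal.ofReal (Real.exp (p*u + (1-p)*v)) < f z} with hC
    have hsub : {z | ∃ a ∈ A, ∃ b ∈ B, z = p • a + (1 - p) • b} ⊆ C := by
      rintro z ⟨a, ha, b, hb, rfl⟩
      show ENNReal.ofReal (Real.exp (p*u + (1-p)*v)) < f (p • a + (1-p) • b)
      refine lt_of_lt_of_le ?_ (hpl a b)
      rw [expkey u v]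
      exact rpow_mul_lt hp.1 hp1 (ENNReal.ofReal_pos.mpr (Real.exp_pos u)).ne'
        ENNReal.ofReal_ne_top (ENNReal.ofReal_pos.mpr (Real.exp_pos v)).ne'
        ENNReal.ofReal_ne_top ha hb
    have hBM := hmeas A B C (measurableSet_lt measurable_const hg)
      (measurableSet_lt measurable_const hh) (measurableSet_lt measurable_const hf) hsub
    calc γ u ^ p * η v ^ (1-p)
        = (X ^ p * ν A ^ p) * (Y ^ (1-p) * ω B ^ (1-p)) := by
          rw [hγdef, hηdef, ENNReal.mul_rpow_of_nonneg _ _ hp.1.le,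
            ENNReal.mul_rpow_of_nonneg _ _ hp1.le]
      _ = (X ^ p * Y ^ (1-p)) * (ν A ^ p * ω B ^ (1-p)) := by ring
      _ = ENNReal.ofReal (Real.exp (p*u + (1-p)*v)) * (ν A ^ p * ω B ^ (1-p)) := by
          rw [expkey u v]
      _ ≤ ENNReal.ofReal (Real.exp (p*u + (1-p)*v)) * μ C := mul_le_mul_right hBM _
      _ = φ (p*u + (1-p)*v) := rfl
  rw [ge_iff_le, repr μ ‹_› f hf, repr ν ‹_› g hg, repr ω ‹_› h hh]
  exact onedimPL hp hφm hγm hηm hplR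
end

section
/- (Prékopa) If ρ : ℝⁿ × ℝᵐ → [0,∞) is log-concave and integrable in the second variable, then the marginal x ↦ ∫_{ℝᵐ} ρ(x,y) dy is log-concave on ℝⁿ. -/
open Set MeasureTheory
open scoped ENNReal Pointwise NNReal

lemma compact_add_meas {K L : Set ℝ} (hK : IsCompact K) (hL : IsCompact L)
    (hKne : K.Nonempty) (hLne : L.Nonempty) :
    volume K + volume L ≤ volume (K + L) := by
  set a := sSup K with ha
  set b := sInf L with hb
  have haK : a ∈ K := hK.sSup_mem hKne
  have hbL : b ∈ L := hL.sInf_mem hLne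
  have hU : (b +ᵥ K) ∪ (a +ᵥ L) ⊆ K + L := by
    rintro u (⟨k, hk, rfl⟩ | ⟨m, hm, rfl⟩)
    · exact ⟨k, hk, b, hbL, by simp [add_comm]⟩
    · exact ⟨a, haK, m, hm, rfl⟩
  have hI : (b +ᵥ K) ∩ (a +ᵥ L) ⊆ {a + b} := by
    rintro u ⟨⟨k, hk, rfl⟩, ⟨m, hm, hmu⟩⟩
    have h1 : b + k ≤ b + a := by
      have := le_csSup hK.bddAbove hk; linarith
    have h2 : a + b ≤ b + k := by
      have hbm : b ≤ m := csInf_le hL.bddBelow hm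
      have : a + m = b + k := hmu
      linarith
    have : b + k = a + b := le_antisymm (by linarith) h2
    simp [this]
  have hmeas : MeasurableSet (a +ᵥ L) := hL.measurableSet.const_vadd a
  calc volume K + volume L
      = volume (b +ᵥ K) + volume (a +ᵥ L) := by rw [measure_vadd, measure_vadd]
    _ = volume ((b +ᵥ K) ∪ (a +ᵥ L)) + volume ((b +ᵥ K) ∩ (a +ᵥ L)) :=
        (measure_union_add_inter _ hmeas).symm
    _ ≤ volume (K + L) + 0 := by
        refine add_le_add (measure_mono hU) ?_
        refine le_trans (measure_mono hI) ?_
        simp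
    _ = volume (K + L) := by simp

lemma comb_measure {c d : ℝ} (hc : 0 < c) (hd : 0 < d) {A B C : Set ℝ}
    (hA : MeasurableSet A) (hB : MeasurableSet B)
    (hAne : A.Nonempty) (hBne : B.Nonempty)
    (hAfin : volume A ≠ ⊤) (hBfin : volume B ≠ ⊤)
    (hsub : ∀ a ∈ A, ∀ b ∈ B, c * a + d * b ∈ C) :
    ENNReal.ofReal c * volume A + ENNReal.ofReal d * volume B ≤ volume C := by
  refine ENNReal.le_of_forall_pos_le_add fun ε hε _ => ?_
  obtain ⟨a₀, ha₀⟩ := hAne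
  obtain ⟨b₀, hb₀⟩ := hBne
  set εA : ℝ≥0∞ := ((ε : ℝ≥0∞) / 2) / ENNReal.ofReal c with hεA
  set εB : ℝ≥0∞ := ((ε : ℝ≥0∞) / 2) / ENNReal.ofReal d with hεB
  have hεA0 : εA ≠ 0 := by
    apply ENNReal.div_ne_zero.2
    constructor
    · exact ENNReal.div_ne_zero.2 ⟨by exact_mod_cast hε.ne', by norm_num⟩
    · exact ENNReal.ofReal_ne_top
  have hεB0 : εB ≠ 0 := by
    apply ENNReal.div_ne_zero.2
    constructor
    · exact ENNReal.div_ne_zero.2 ⟨by exact_mod_cast hε.ne', by norm_num⟩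
    · exact ENNReal.ofReal_ne_top
  obtain ⟨K₀, hK₀A, hK₀c, hK₀m⟩ := hA.exists_isCompact_lt_add hAfin hεA0
  obtain ⟨L₀, hL₀B, hL₀c, hL₀m⟩ := hB.exists_isCompact_lt_add hBfin hεB0
  set K : Set ℝ := insert a₀ K₀ with hKdef
  set L : Set ℝ := insert b₀ L₀ with hLdef
  have hKA : K ⊆ A := insert_subset ha₀ hK₀A
  have hLB : L ⊆ B := insert_subset hb₀ hL₀B
  have hKc : IsCompact K := hK₀c.insert a₀
  have hLc : IsCompact L := hL₀c.insert b₀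
  have hKm : volume A ≤ volume K + εA :=
    le_trans hK₀m.le (add_le_add_left (measure_mono (subset_insert _ _)) _)
  have hLm : volume B ≤ volume L + εB :=
    le_trans hL₀m.le (add_le_add_left (measure_mono (subset_insert _ _)) _)
  -- core estimate with compacts
  have hsmulK : volume (c • K) = ENNReal.ofReal c * volume K := by
    rw [Measure.addHaar_smul]
    congr 1
    rw [Module.finrank_self, pow_one, abs_of_pos hc]
  have hsmulL : volume (d • L) = ENNReal.ofReal d * volume L := by
    rw [Measure.addHaar_smul]
    congr 1
    rw [Module.finrank_self, pow_one, abs_of_pos hd]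
  have hcore : ENNReal.ofReal c * volume K + ENNReal.ofReal d * volume L ≤ volume C := by
    rw [← hsmulK, ← hsmulL]
    refine le_trans (compact_add_meas (hKc.smul c) (hLc.smul d)
      (Nonempty.smul_set ⟨a₀, mem_insert _ _⟩) (Nonempty.smul_set ⟨b₀, mem_insert _ _⟩)) ?_
    apply measure_mono
    rintro u ⟨v, ⟨k, hk, rfl⟩, w, ⟨m, hm, rfl⟩, rfl⟩
    exact hsub k (hKA hk) m (hLB hm)
  calc ENNReal.ofReal c * volume A + ENNReal.ofReal d * volume B
      ≤ (ENNReal.ofReal c * volume K + ENNReal.ofReal c * εA)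
        + (ENNReal.ofReal d * volume L + ENNReal.ofReal d * εB) := by
        refine add_le_add ?_ ?_
        · rw [← mul_add]; exact mul_le_mul_right hKm _
        · rw [← mul_add]; exact mul_le_mul_right hLm _
    _ ≤ (ENNReal.ofReal c * volume K + ENNReal.ofReal d * volume L)
        + ((ε : ℝ≥0∞) / 2 + (ε : ℝ≥0∞) / 2) := by
        have h1 : ENNReal.ofReal c * εA ≤ (ε : ℝ≥0∞) / 2 := ENNReal.mul_div_le
        have h2 : ENNReal.ofReal d * εB ≤ (ε : ℝ≥0∞) / 2 := ENNReal.mul_div_le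
        calc (ENNReal.ofReal c * volume K + ENNReal.ofReal c * εA)
            + (ENNReal.ofReal d * volume L + ENNReal.ofReal d * εB)
            ≤ (ENNReal.ofReal c * volume K + (ε : ℝ≥0∞) / 2)
              + (ENNReal.ofReal d * volume L + (ε : ℝ≥0∞) / 2) :=
              add_le_add (add_le_add_right h1 _) (add_le_add_right h2 _)
          _ = _ := by ring
    _ ≤ volume C + (ε : ℝ≥0∞) := by
        refine add_le_add hcore (le_of_eq ?_)
        rw [ENNReal.add_halves]
lemma ennreal_geom_mean {l : ℝ} (hl : l ∈ Ioo (0:ℝ) 1) (a b : ℝ≥0∞) :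
    a ^ (1 - l) * b ^ l ≤ ENNReal.ofReal (1 - l) * a + ENNReal.ofReal l * b := by
  obtain ⟨hl0, hl1⟩ := hl
  have h1l : (0:ℝ) < 1 - l := by linarith
  by_cases ha : a = ⊤
  · subst ha
    have : ENNReal.ofReal (1 - l) * (⊤ : ℝ≥0∞) = ⊤ := by
      rw [ENNReal.mul_top]
      exact (ENNReal.ofReal_pos.2 h1l).ne'
    rw [this]
    simp
  by_cases hb : b = ⊤
  · subst hb
    have : ENNReal.ofReal l * (⊤ : ℝ≥0∞) = ⊤ := by
      rw [ENNReal.mul_top]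
      exact (ENNReal.ofReal_pos.2 hl0).ne'
    rw [this]
    simp
  -- finite case
  rw [← ENNReal.ofReal_toReal ha, ← ENNReal.ofReal_toReal hb]
  rw [ENNReal.ofReal_rpow_of_nonneg ENNReal.toReal_nonneg h1l.le,
    ENNReal.ofReal_rpow_of_nonneg ENNReal.toReal_nonneg hl0.le,
    ← ENNReal.ofReal_mul (Real.rpow_nonneg ENNReal.toReal_nonneg _),
    ← ENNReal.ofReal_mul h1l.le, ← ENNReal.ofReal_mul hl0.le,
    ← ENNReal.ofReal_add (by positivity) (by positivity)]
  exact ENNReal.ofReal_le_ofReal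
    (Real.geom_mean_le_arith_mean2_weighted h1l.le hl0.le ENNReal.toReal_nonneg
      ENNReal.toReal_nonneg (by ring))

lemma one_dim_norm {l : ℝ} (hl : l ∈ Ioo (0:ℝ) 1) {f g h : ℝ → ℝ≥0∞}
    (hf : Measurable f) (hg : Measurable g) (hh : Measurable h)
    (hf1 : ∀ x, f x ≤ 1) (hg1 : ∀ x, g x ≤ 1)
    (hfs : ⨆ x, f x = 1) (hgs : ⨆ x, g x = 1)
    (hfint : ∫⁻ x, f x ≠ ⊤) (hgint : ∫⁻ x, g x ≠ ⊤)
    (hyp : ∀ x y : ℝ, f x ^ (1 - l) * g y ^ l ≤ h ((1 - l) • x + l • y)) :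
    ENNReal.ofReal (1 - l) * (∫⁻ x, f x) + ENNReal.ofReal l * (∫⁻ x, g x) ≤ ∫⁻ x, h x := by
  obtain ⟨hl0, hl1⟩ := hl
  have h1l : (0:ℝ) < 1 - l := by linarith
  set h₁ : ℝ → ℝ≥0∞ := fun x => min (h x) 1 with hh₁def
  have hh₁ : Measurable h₁ := hh.min measurable_const
  have hfne : ∀ x, f x ≠ ⊤ := fun x => ((hf1 x).trans_lt ENNReal.one_lt_top).ne
  have hgne : ∀ x, g x ≠ ⊤ := fun x => ((hg1 x).trans_lt ENNReal.one_lt_top).ne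
  have hh₁ne : ∀ x, h₁ x ≠ ⊤ := fun x =>
    ((min_le_right _ _).trans_lt ENNReal.one_lt_top).ne
  -- layer cake representations
  have layer : ∀ (φ : ℝ → ℝ≥0∞), Measurable φ → (∀ x, φ x ≠ ⊤) →
      ∫⁻ x, φ x = ∫⁻ t in Ioi (0:ℝ), volume {x | ENNReal.ofReal t < φ x} := by
    intro φ hφ hφne
    have h1 : ∫⁻ x, φ x = ∫⁻ x, ENNReal.ofReal ((φ x).toReal) := by
      congr 1; funext x; rw [ENNReal.ofReal_toReal (hφne x)]
    rw [h1, lintegral_eq_lintegral_meas_lt volume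
      (Filter.Eventually.of_forall fun x => ENNReal.toReal_nonneg)
      (hφ.ennreal_toReal).aemeasurable]
    refine setLIntegral_congr_fun measurableSet_Ioi
      (fun t ht => ?_)
    congr 1
    ext x
    simp only [mem_setOf_eq]
    exact (ENNReal.ofReal_lt_iff_lt_toReal (le_of_lt ht) (hφne x)).symm
  -- superlevel measure functions
  set Af : ℝ → ℝ≥0∞ := fun t => volume {x | ENNReal.ofReal t < f x} with hAf
  set Ag : ℝ → ℝ≥0∞ := fun t => volume {x | ENNReal.ofReal t < g x} with hAg
  set Ah : ℝ → ℝ≥0∞ := fun t => volume {x | ENNReal.ofReal t < h₁ x} with hAh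
  have hAfmono : Antitone Af := by
    intro s t hst
    exact measure_mono fun x hx => lt_of_le_of_lt (ENNReal.ofReal_le_ofReal hst) hx
  have hAgmono : Antitone Ag := by
    intro s t hst
    exact measure_mono fun x hx => lt_of_le_of_lt (ENNReal.ofReal_le_ofReal hst) hx
  -- restriction to Ioo 0 1 for f and g
  have hsplit : ∀ (φ : ℝ → ℝ≥0∞), (∀ x, φ x ≤ 1) →
      (∫⁻ t in Ioi (0:ℝ), volume {x | ENNReal.ofReal t < φ x})
        = ∫⁻ t in Ioo (0:ℝ) 1, volume {x | ENNReal.ofReal t < φ x} := by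
    intro φ hφ1
    have hun : Ioi (0:ℝ) = Ioo (0:ℝ) 1 ∪ Ici (1:ℝ) := by
      ext t; simp only [mem_Ioi, mem_union, mem_Ioo, mem_Ici]
      constructor
      · intro ht; by_cases h1 : t < 1
        · exact Or.inl ⟨ht, h1⟩
        · exact Or.inr (le_of_not_gt h1)
      · rintro (⟨h1, _⟩ | h1) <;> linarith
    rw [hun, lintegral_union measurableSet_Ici (by
      rw [Set.disjoint_left]; rintro t ⟨_, ht1⟩ ht2; exact absurd ht2 (not_le.2 ht1))]
    have : ∫⁻ t in Ici (1:ℝ), volume {x | ENNReal.ofReal t < φ x} = 0 := by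
      rw [← lintegral_zero (μ := volume.restrict (Ici (1:ℝ)))]
      refine setLIntegral_congr_fun measurableSet_Ici
        (fun t ht => ?_)
      have : {x | ENNReal.ofReal t < φ x} = ∅ := by
        ext x; simp only [mem_setOf_eq, mem_empty_iff_false, iff_false, not_lt]
        exact (hφ1 x).trans (ENNReal.one_le_ofReal.2 ht)
      rw [this]; simp
    rw [this, add_zero]
  -- the pointwise superlevel inequality
  have key : ∀ t ∈ Ioo (0:ℝ) 1,
      ENNReal.ofReal (1 - l) * Af t + ENNReal.ofReal l * Ag t ≤ Ah t := by
    intro t ht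
    obtain ⟨ht0, ht1⟩ := ht
    have htne0 : ENNReal.ofReal t ≠ 0 := (ENNReal.ofReal_pos.2 ht0).ne'
    have htlt1 : ENNReal.ofReal t < 1 := ENNReal.ofReal_lt_one.2 ht1
    have hAne : {x | ENNReal.ofReal t < f x}.Nonempty := by
      have : ENNReal.ofReal t < ⨆ x, f x := by rw [hfs]; exact htlt1
      obtain ⟨x, hx⟩ := lt_iSup_iff.1 this
      exact ⟨x, hx⟩
    have hBne : {x | ENNReal.ofReal t < g x}.Nonempty := by
      have : ENNReal.ofReal t < ⨆ x, g x := by rw [hgs]; exact htlt1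
      obtain ⟨x, hx⟩ := lt_iSup_iff.1 this
      exact ⟨x, hx⟩
    have hAfin : Af t ≠ ⊤ := by
      have hsub1 : {x | ENNReal.ofReal t < f x} ⊆ {x | ENNReal.ofReal t ≤ f x} :=
        fun x (hx : ENNReal.ofReal t < f x) => le_of_lt hx
      have h1 : Af t ≤ (∫⁻ x, f x) / ENNReal.ofReal t :=
        le_trans (measure_mono hsub1)
          (meas_ge_le_lintegral_div hf.aemeasurable htne0 ENNReal.ofReal_ne_top)
      exact (h1.trans_lt (ENNReal.div_lt_top hfint htne0)).ne
    have hBfin : Ag t ≠ ⊤ := by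
      have hsub1 : {x | ENNReal.ofReal t < g x} ⊆ {x | ENNReal.ofReal t ≤ g x} :=
        fun x (hx : ENNReal.ofReal t < g x) => le_of_lt hx
      have h1 : Ag t ≤ (∫⁻ x, g x) / ENNReal.ofReal t :=
        le_trans (measure_mono hsub1)
          (meas_ge_le_lintegral_div hg.aemeasurable htne0 ENNReal.ofReal_ne_top)
      exact (h1.trans_lt (ENNReal.div_lt_top hgint htne0)).ne
    refine comb_measure h1l hl0 (hf measurableSet_Ioi) (hg measurableSet_Ioi)
      hAne hBne hAfin hBfin ?_
    intro a ha b hb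
    simp only [mem_setOf_eq] at ha hb ⊢
    have hstrict : ENNReal.ofReal t < f a ^ (1 - l) * g b ^ l := by
      have e1 : ENNReal.ofReal t = (ENNReal.ofReal t) ^ (1 - l) * (ENNReal.ofReal t) ^ l := by
        rw [← ENNReal.rpow_add _ _ htne0 ENNReal.ofReal_ne_top]
        norm_num
      rw [e1]
      calc (ENNReal.ofReal t) ^ (1 - l) * (ENNReal.ofReal t) ^ l
          < f a ^ (1 - l) * (ENNReal.ofReal t) ^ l := by
            refine ENNReal.mul_lt_mul_left (by
              exact (ENNReal.rpow_pos (ENNReal.ofReal_pos.2 ht0) ENNReal.ofReal_ne_top).ne')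
              (ENNReal.rpow_ne_top_of_nonneg hl0.le ENNReal.ofReal_ne_top) ?_
            exact ENNReal.rpow_lt_rpow ha h1l
      _ ≤ f a ^ (1 - l) * g b ^ l :=
            mul_le_mul_right (ENNReal.rpow_le_rpow hb.le hl0.le) _
    have := lt_of_lt_of_le hstrict (hyp a b)
    simp only [smul_eq_mul] at this
    exact lt_min this htlt1
  -- assemble
  have hmeasAf : Measurable Af := hAfmono.measurable
  have hmeasAg : Measurable Ag := hAgmono.measurable
  have ef : (∫⁻ x, f x) = ∫⁻ t in Ioo (0:ℝ) 1, Af t :=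
    (layer f hf hfne).trans (hsplit f hf1)
  have eg : (∫⁻ x, g x) = ∫⁻ t in Ioo (0:ℝ) 1, Ag t :=
    (layer g hg hgne).trans (hsplit g hg1)
  rw [ef, eg]
  calc ENNReal.ofReal (1 - l) * (∫⁻ t in Ioo (0:ℝ) 1, Af t)
      + ENNReal.ofReal l * (∫⁻ t in Ioo (0:ℝ) 1, Ag t)
      = ∫⁻ t in Ioo (0:ℝ) 1, (ENNReal.ofReal (1 - l) * Af t + ENNReal.ofReal l * Ag t) := by
        rw [← lintegral_const_mul _ hmeasAf, ← lintegral_const_mul _ hmeasAg,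
          ← lintegral_add_left (hmeasAf.const_mul _)]
    _ ≤ ∫⁻ t in Ioo (0:ℝ) 1, Ah t :=
        lintegral_mono_ae ((ae_restrict_iff' measurableSet_Ioo).2
          (Filter.Eventually.of_forall fun t ht => key t ht))
    _ ≤ ∫⁻ t in Ioi (0:ℝ), Ah t := lintegral_mono_set Ioo_subset_Ioi_self
    _ = ∫⁻ x, h₁ x := (layer h₁ hh₁ hh₁ne).symm
    _ ≤ ∫⁻ x, h x := lintegral_mono fun x => min_le_left _ _

def IsPLGood {α : Type*} [MeasurableSpace α] [AddCommMonoid α] [Module ℝ α]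
    (μ : Measure α) : Prop :=
  ∀ l : ℝ, l ∈ Ioo (0:ℝ) 1 → ∀ f g h : α → ℝ≥0∞,
    Measurable f → Measurable g → Measurable h →
    (∀ x y, f x ^ (1 - l) * g y ^ l ≤ h ((1 - l) • x + l • y)) →
    (∫⁻ x, f x ∂μ) ^ (1 - l) * (∫⁻ x, g x ∂μ) ^ l ≤ ∫⁻ x, h x ∂μ

lemma one_dim_bdd {l : ℝ} (hl : l ∈ Ioo (0:ℝ) 1) {f g h : ℝ → ℝ≥0∞}
    (hf : Measurable f) (hg : Measurable g) (hh : Measurable h)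
    (hMf : (⨆ x, f x) ≠ ⊤) (hMg : (⨆ x, g x) ≠ ⊤)
    (hfint : (∫⁻ x, f x) ≠ ⊤) (hgint : (∫⁻ x, g x) ≠ ⊤)
    (hyp : ∀ x y : ℝ, f x ^ (1 - l) * g y ^ l ≤ h ((1 - l) • x + l • y)) :
    (∫⁻ x, f x) ^ (1 - l) * (∫⁻ x, g x) ^ l ≤ ∫⁻ x, h x := by
  obtain ⟨hl0, hl1⟩ := hl
  have h1l : (0:ℝ) < 1 - l := by linarith
  by_cases hf0 : (∫⁻ x, f x) = 0
  · rw [hf0, ENNReal.zero_rpow_of_pos h1l, zero_mul]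
    exact zero_le
  by_cases hg0 : (∫⁻ x, g x) = 0
  · rw [hg0, ENNReal.zero_rpow_of_pos hl0, mul_zero]
    exact zero_le
  set Mf := ⨆ x, f x with hMfdef
  set Mg := ⨆ x, g x with hMgdef
  have hMf0 : Mf ≠ 0 := by
    intro h0
    apply hf0
    have : ∀ x, f x = 0 := fun x => le_antisymm (h0 ▸ le_iSup f x) (zero_le)
    simp [this]
  have hMg0 : Mg ≠ 0 := by
    intro h0
    apply hg0
    have : ∀ x, g x = 0 := fun x => le_antisymm (h0 ▸ le_iSup g x) (zero_le)
    simp [this]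
  set c : ℝ≥0∞ := Mf ^ (1 - l) * Mg ^ l with hcdef
  have hc0 : c ≠ 0 := by
    apply mul_ne_zero
    · exact (ENNReal.rpow_pos (pos_iff_ne_zero.2 hMf0) hMf).ne'
    · exact (ENNReal.rpow_pos (pos_iff_ne_zero.2 hMg0) hMg).ne'
  have hctop : c ≠ ⊤ := ENNReal.mul_ne_top
    (ENNReal.rpow_ne_top_of_nonneg h1l.le hMf) (ENNReal.rpow_ne_top_of_nonneg hl0.le hMg)
  set f' : ℝ → ℝ≥0∞ := fun x => f x / Mf with hf'def
  set g' : ℝ → ℝ≥0∞ := fun x => g x / Mg with hg'def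
  set h' : ℝ → ℝ≥0∞ := fun x => h x / c with hh'def
  have hf' : Measurable f' := hf.div_const _
  have hg' : Measurable g' := hg.div_const _
  have hh' : Measurable h' := hh.div_const _
  have hf'1 : ∀ x, f' x ≤ 1 := fun x =>
    ENNReal.div_le_of_le_mul (by rw [one_mul]; exact le_iSup f x)
  have hg'1 : ∀ x, g' x ≤ 1 := fun x =>
    ENNReal.div_le_of_le_mul (by rw [one_mul]; exact le_iSup g x)
  have hf's : (⨆ x, f' x) = 1 := by
    simp only [hf'def, div_eq_mul_inv]
    rw [← ENNReal.iSup_mul, ← hMfdef, ENNReal.mul_inv_cancel hMf0 hMf]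
  have hg's : (⨆ x, g' x) = 1 := by
    simp only [hg'def, div_eq_mul_inv]
    rw [← ENNReal.iSup_mul, ← hMgdef, ENNReal.mul_inv_cancel hMg0 hMg]
  have intf' : (∫⁻ x, f' x) = (∫⁻ x, f x) * Mf⁻¹ := by
    simp only [hf'def, div_eq_mul_inv]
    rw [lintegral_mul_const _ hf]
  have intg' : (∫⁻ x, g' x) = (∫⁻ x, g x) * Mg⁻¹ := by
    simp only [hg'def, div_eq_mul_inv]
    rw [lintegral_mul_const _ hg]
  have inth' : (∫⁻ x, h' x) = (∫⁻ x, h x) * c⁻¹ := by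
    simp only [hh'def, div_eq_mul_inv]
    rw [lintegral_mul_const _ hh]
  have hf'int : (∫⁻ x, f' x) ≠ ⊤ := by
    rw [intf']
    exact ENNReal.mul_ne_top hfint (ENNReal.inv_ne_top.2 hMf0)
  have hg'int : (∫⁻ x, g' x) ≠ ⊤ := by
    rw [intg']
    exact ENNReal.mul_ne_top hgint (ENNReal.inv_ne_top.2 hMg0)
  -- the divided hypothesis
  have divmul : ∀ (a b u v : ℝ≥0∞), u ≠ 0 → u ≠ ⊤ → v ≠ 0 → v ≠ ⊤ →
      a / u * (b / v) = a * b / (u * v) := by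
    intro a b u v hu0 hut hv0 hvt
    rw [div_eq_mul_inv, div_eq_mul_inv, div_eq_mul_inv,
      ENNReal.mul_inv (Or.inl hu0) (Or.inl hut)]
    ring
  have hyp' : ∀ x y : ℝ, f' x ^ (1 - l) * g' y ^ l ≤ h' ((1 - l) • x + l • y) := by
    intro x y
    have e1 : f' x ^ (1 - l) = f x ^ (1 - l) / Mf ^ (1 - l) :=
      ENNReal.div_rpow_of_nonneg _ _ h1l.le
    have e2 : g' y ^ l = g y ^ l / Mg ^ l := ENNReal.div_rpow_of_nonneg _ _ hl0.le
    rw [e1, e2, divmul _ _ _ _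
      (ENNReal.rpow_pos (pos_iff_ne_zero.2 hMf0) hMf).ne'
      (ENNReal.rpow_ne_top_of_nonneg h1l.le hMf)
      (ENNReal.rpow_pos (pos_iff_ne_zero.2 hMg0) hMg).ne'
      (ENNReal.rpow_ne_top_of_nonneg hl0.le hMg)]
    exact ENNReal.div_le_div_right (hyp x y) c
  have norm := one_dim_norm ⟨hl0, hl1⟩ hf' hg' hh' hf'1 hg'1 hf's hg's hf'int hg'int hyp'
  have geom := ennreal_geom_mean ⟨hl0, hl1⟩ (∫⁻ x, f' x) (∫⁻ x, g' x)
  have main : (∫⁻ x, f' x) ^ (1 - l) * (∫⁻ x, g' x) ^ l ≤ (∫⁻ x, h x) / c := by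
    refine le_trans geom (le_trans norm ?_)
    rw [inth', div_eq_mul_inv]
  -- unfold the normalizations on the left
  have lhs_eq : (∫⁻ x, f' x) ^ (1 - l) * (∫⁻ x, g' x) ^ l
      = ((∫⁻ x, f x) ^ (1 - l) * (∫⁻ x, g x) ^ l) / c := by
    rw [intf', intg', ENNReal.mul_rpow_of_ne_top hfint (ENNReal.inv_ne_top.2 hMf0),
      ENNReal.mul_rpow_of_ne_top hgint (ENNReal.inv_ne_top.2 hMg0)]
    rw [← ENNReal.rpow_neg_one Mf, ← ENNReal.rpow_neg_one Mg,
      ← ENNReal.rpow_mul, ← ENNReal.rpow_mul]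
    have : (∫⁻ x, f x) ^ (1 - l) * Mf ^ (-1 * (1 - l)) * ((∫⁻ x, g x) ^ l * Mg ^ (-1 * l))
        = (∫⁻ x, f x) ^ (1 - l) * (∫⁻ x, g x) ^ l * (Mf ^ (-1 * (1 - l)) * Mg ^ (-1 * l)) := by
      ring
    rw [this, div_eq_mul_inv]
    congr 1
    rw [hcdef, ENNReal.mul_inv (Or.inl (ENNReal.rpow_pos (pos_iff_ne_zero.2 hMf0) hMf).ne')
      (Or.inl (ENNReal.rpow_ne_top_of_nonneg h1l.le hMf))]
    congr 1
    · rw [← ENNReal.rpow_neg]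
      congr 1
      ring
    · rw [← ENNReal.rpow_neg]
      congr 1
      ring
  rw [lhs_eq] at main
  -- multiply back by c
  calc (∫⁻ x, f x) ^ (1 - l) * (∫⁻ x, g x) ^ l
      = ((∫⁻ x, f x) ^ (1 - l) * (∫⁻ x, g x) ^ l) / c * c :=
        (ENNReal.div_mul_cancel hc0 hctop).symm
    _ ≤ (∫⁻ x, h x) / c * c := mul_le_mul_left main c
    _ ≤ ∫⁻ x, h x := by
        rw [mul_comm]
        exact ENNReal.mul_div_le

lemma ennreal_iSup_min_nat (a : ℝ≥0∞) : (⨆ n : ℕ, min a n) = a := by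
  apply le_antisymm (iSup_le fun n => min_le_left _ _)
  by_cases ha : a = ⊤
  · subst ha
    rw [← ENNReal.iSup_natCast]
    exact iSup_mono fun n => le_inf (le_iSup (fun m : ℕ => (m:ℝ≥0∞)) n) le_rfl
  · obtain ⟨n, hn⟩ := ENNReal.exists_nat_gt ha
    refine le_trans ?_ (le_iSup _ n)
    simp [le_of_lt hn]

lemma isPLGood_real : IsPLGood (volume : Measure ℝ) := by
  intro l hl f g h hf hg hh hyp
  obtain ⟨hl0, hl1⟩ := hl
  have h1l : (0:ℝ) < 1 - l := by linarith
  -- truncations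
  set F : ℕ → ℝ → ℝ≥0∞ :=
    fun k x => (Icc (-(k:ℝ)) k).indicator (fun x => min (f x) k) x with hFdef
  set G : ℕ → ℝ → ℝ≥0∞ :=
    fun k x => (Icc (-(k:ℝ)) k).indicator (fun x => min (g x) k) x with hGdef
  have hFm : ∀ k, Measurable (F k) :=
    fun k => (hf.min measurable_const).indicator measurableSet_Icc
  have hGm : ∀ k, Measurable (G k) :=
    fun k => (hg.min measurable_const).indicator measurableSet_Icc
  have hFle : ∀ k x, F k x ≤ f x := by
    intro k x
    refine le_trans (indicator_le_self _ _ x) (min_le_left _ _)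
  have hGle : ∀ k x, G k x ≤ g x := by
    intro k x
    refine le_trans (indicator_le_self _ _ x) (min_le_left _ _)
  have hFmono : Monotone F := by
    intro j k hjk x
    simp only [hFdef]
    by_cases hx : x ∈ Icc (-(j:ℝ)) j
    · have hx' : x ∈ Icc (-(k:ℝ)) k := by
        obtain ⟨h1, h2⟩ := hx
        constructor
        · have : (j:ℝ) ≤ k := by exact_mod_cast hjk
          linarith
        · have : (j:ℝ) ≤ k := by exact_mod_cast hjk
          linarith
      rw [indicator_of_mem hx, indicator_of_mem hx']
      exact min_le_min (le_refl _) (by exact_mod_cast hjk)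
    · rw [indicator_of_notMem hx]
      exact zero_le
  have hGmono : Monotone G := by
    intro j k hjk x
    simp only [hGdef]
    by_cases hx : x ∈ Icc (-(j:ℝ)) j
    · have hx' : x ∈ Icc (-(k:ℝ)) k := by
        obtain ⟨h1, h2⟩ := hx
        constructor
        · have : (j:ℝ) ≤ k := by exact_mod_cast hjk
          linarith
        · have : (j:ℝ) ≤ k := by exact_mod_cast hjk
          linarith
      rw [indicator_of_mem hx, indicator_of_mem hx']
      exact min_le_min (le_refl _) (by exact_mod_cast hjk)
    · rw [indicator_of_notMem hx]
      exact zero_le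
  have hFsup : ∀ x, (⨆ k, F k x) = f x := by
    intro x
    apply le_antisymm (iSup_le fun k => hFle k x)
    obtain ⟨k₀, hk₀⟩ := exists_nat_ge |x|
    have habs := abs_le.1 (le_trans (le_refl |x|) hk₀)
    have hmem : ∀ k : ℕ, x ∈ Icc (-((k₀ + k : ℕ):ℝ)) ((k₀ + k : ℕ):ℝ) := by
      intro k
      have h1 : (k₀:ℝ) ≤ ((k₀ + k : ℕ):ℝ) := by
        push_cast
        linarith [Nat.cast_nonneg (α := ℝ) k]
      exact ⟨by linarith [habs.1], by linarith [habs.2]⟩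
    have key : ∀ k : ℕ, min (f x) k ≤ ⨆ j, F j x := by
      intro k
      refine le_trans ?_ (le_iSup _ (k₀ + k))
      rw [hFdef]
      simp only
      rw [indicator_of_mem (hmem k)]
      refine min_le_min (le_refl _) ?_
      exact_mod_cast Nat.le_add_left k k₀
    calc f x = ⨆ k : ℕ, min (f x) k := (ennreal_iSup_min_nat _).symm
      _ ≤ ⨆ j, F j x := iSup_le key
  have hGsup : ∀ x, (⨆ k, G k x) = g x := by
    intro x
    apply le_antisymm (iSup_le fun k => hGle k x)
    obtain ⟨k₀, hk₀⟩ := exists_nat_ge |x|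
    have habs := abs_le.1 (le_trans (le_refl |x|) hk₀)
    have hmem : ∀ k : ℕ, x ∈ Icc (-((k₀ + k : ℕ):ℝ)) ((k₀ + k : ℕ):ℝ) := by
      intro k
      have h1 : (k₀:ℝ) ≤ ((k₀ + k : ℕ):ℝ) := by
        push_cast
        linarith [Nat.cast_nonneg (α := ℝ) k]
      exact ⟨by linarith [habs.1], by linarith [habs.2]⟩
    have key : ∀ k : ℕ, min (g x) k ≤ ⨆ j, G j x := by
      intro k
      refine le_trans ?_ (le_iSup _ (k₀ + k))
      rw [hGdef]
      simp only
      rw [indicator_of_mem (hmem k)]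
      refine min_le_min (le_refl _) ?_
      exact_mod_cast Nat.le_add_left k k₀
    calc g x = ⨆ k : ℕ, min (g x) k := (ennreal_iSup_min_nat _).symm
      _ ≤ ⨆ j, G j x := iSup_le key
  -- integrals and sups of truncations are finite
  have hFsupk : ∀ k, (⨆ x, F k x) ≠ ⊤ := by
    intro k
    refine ne_top_of_le_ne_top (ENNReal.natCast_ne_top k) (iSup_le fun x => ?_)
    refine le_trans (indicator_le_self _ _ x) (min_le_right _ _)
  have hGsupk : ∀ k, (⨆ x, G k x) ≠ ⊤ := by
    intro k
    refine ne_top_of_le_ne_top (ENNReal.natCast_ne_top k) (iSup_le fun x => ?_)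
    refine le_trans (indicator_le_self _ _ x) (min_le_right _ _)
  have hFintk : ∀ k, (∫⁻ x, F k x) ≠ ⊤ := by
    intro k
    have hb : ∀ x, F k x ≤ (Icc (-(k:ℝ)) k).indicator (fun _ => (k:ℝ≥0∞)) x := by
      intro x
      exact indicator_le_indicator' (fun _ => min_le_right _ _)
    refine ne_top_of_le_ne_top ?_ (lintegral_mono hb)
    rw [lintegral_indicator_const measurableSet_Icc]
    exact ENNReal.mul_ne_top (ENNReal.natCast_ne_top k)
      (by rw [Real.volume_Icc]; exact ENNReal.ofReal_ne_top)
  have hGintk : ∀ k, (∫⁻ x, G k x) ≠ ⊤ := by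
    intro k
    have hb : ∀ x, G k x ≤ (Icc (-(k:ℝ)) k).indicator (fun _ => (k:ℝ≥0∞)) x := by
      intro x
      exact indicator_le_indicator' (fun _ => min_le_right _ _)
    refine ne_top_of_le_ne_top ?_ (lintegral_mono hb)
    rw [lintegral_indicator_const measurableSet_Icc]
    exact ENNReal.mul_ne_top (ENNReal.natCast_ne_top k)
      (by rw [Real.volume_Icc]; exact ENNReal.ofReal_ne_top)
  -- truncations satisfy the hypothesis
  have hypk : ∀ k, ∀ x y : ℝ, F k x ^ (1 - l) * G k y ^ l ≤ h ((1 - l) • x + l • y) := by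
    intro k x y
    refine le_trans ?_ (hyp x y)
    exact mul_le_mul' (ENNReal.rpow_le_rpow (hFle k x) h1l.le)
      (ENNReal.rpow_le_rpow (hGle k y) hl0.le)
  have keyk : ∀ k, (∫⁻ x, F k x) ^ (1 - l) * (∫⁻ x, G k x) ^ l ≤ ∫⁻ x, h x :=
    fun k => one_dim_bdd ⟨hl0, hl1⟩ (hFm k) (hGm k) hh (hFsupk k) (hGsupk k)
      (hFintk k) (hGintk k) (hypk k)
  -- monotone convergence
  have hFconv : (⨆ k, ∫⁻ x, F k x) = ∫⁻ x, f x := by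
    rw [← lintegral_iSup hFm (fun j k hjk => hFmono hjk)]
    congr 1
    funext x
    exact hFsup x
  have hGconv : (⨆ k, ∫⁻ x, G k x) = ∫⁻ x, g x := by
    rw [← lintegral_iSup hGm (fun j k hjk => hGmono hjk)]
    congr 1
    funext x
    exact hGsup x
  -- conclude
  by_cases hf0 : (∫⁻ x, f x) = 0
  · rw [hf0, ENNReal.zero_rpow_of_pos h1l, zero_mul]
    exact zero_le
  by_cases hg0 : (∫⁻ x, g x) = 0
  · rw [hg0, ENNReal.zero_rpow_of_pos hl0, mul_zero]
    exact zero_le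
  have hFmono' : Monotone fun k => ∫⁻ x, F k x :=
    fun j k hjk => lintegral_mono fun x => hFmono hjk x
  have hGmono' : Monotone fun k => ∫⁻ x, G k x :=
    fun j k hjk => lintegral_mono fun x => hGmono hjk x
  have hFt : Filter.Tendsto (fun k => ∫⁻ x, F k x) Filter.atTop (nhds (∫⁻ x, f x)) := by
    rw [← hFconv]
    exact tendsto_atTop_iSup hFmono'
  have hGt : Filter.Tendsto (fun k => ∫⁻ x, G k x) Filter.atTop (nhds (∫⁻ x, g x)) := by
    rw [← hGconv]
    exact tendsto_atTop_iSup hGmono'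
  have hFrt : Filter.Tendsto (fun k => (∫⁻ x, F k x) ^ (1 - l)) Filter.atTop
      (nhds ((∫⁻ x, f x) ^ (1 - l))) :=
    (ENNReal.continuous_rpow_const.tendsto _).comp hFt
  have hGrt : Filter.Tendsto (fun k => (∫⁻ x, G k x) ^ l) Filter.atTop
      (nhds ((∫⁻ x, g x) ^ l)) :=
    (ENNReal.continuous_rpow_const.tendsto _).comp hGt
  have hprod : Filter.Tendsto (fun k => (∫⁻ x, F k x) ^ (1 - l) * (∫⁻ x, G k x) ^ l)
      Filter.atTop (nhds ((∫⁻ x, f x) ^ (1 - l) * (∫⁻ x, g x) ^ l)) := by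
    have ha : (∫⁻ x, f x) ^ (1 - l) ≠ 0 := by
      rw [ne_eq, ENNReal.rpow_eq_zero_iff]
      rintro (⟨h1, _⟩ | ⟨_, h2⟩)
      · exact hf0 h1
      · linarith
    have hb : (∫⁻ x, g x) ^ l ≠ 0 := by
      rw [ne_eq, ENNReal.rpow_eq_zero_iff]
      rintro (⟨h1, _⟩ | ⟨_, h2⟩)
      · exact hg0 h1
      · linarith
    exact ENNReal.Tendsto.mul hFrt (Or.inl ha) hGrt (Or.inl hb)
  exact le_of_tendsto' hprod keyk

lemma isPLGood_prod {α β : Type*} [MeasurableSpace α] [MeasurableSpace β]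
    [AddCommMonoid α] [Module ℝ α] [AddCommMonoid β] [Module ℝ β]
    {μ : Measure α} {ν : Measure β} [SFinite ν]
    (hμ : IsPLGood μ) (hν : IsPLGood ν) : IsPLGood (μ.prod ν) := by
  intro l hl f g h hf hg hh hyp
  set F : α → ℝ≥0∞ := fun x => ∫⁻ y, f (x, y) ∂ν with hFdef
  set G : α → ℝ≥0∞ := fun x => ∫⁻ y, g (x, y) ∂ν with hGdef
  set H : α → ℝ≥0∞ := fun x => ∫⁻ y, h (x, y) ∂ν with hHdef
  have hFm : Measurable F := hf.lintegral_prod_right'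
  have hGm : Measurable G := hg.lintegral_prod_right'
  have hHm : Measurable H := hh.lintegral_prod_right'
  have inner : ∀ x x' : α, F x ^ (1 - l) * G x' ^ l ≤ H ((1 - l) • x + l • x') := by
    intro x x'
    refine hν l hl (fun y => f (x, y)) (fun y => g (x', y))
      (fun y => h ((1 - l) • x + l • x', y))
      (hf.comp measurable_prodMk_left) (hg.comp measurable_prodMk_left)
      (hh.comp measurable_prodMk_left) ?_
    intro y y'
    exact hyp (x, y) (x', y')
  have outer := hμ l hl F G H hFm hGm hHm inner
  rw [lintegral_prod f hf.aemeasurable, lintegral_prod g hg.aemeasurable,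
    lintegral_prod h hh.aemeasurable]
  exact outer

lemma isPLGood_pi : ∀ m : ℕ, IsPLGood (volume : Measure (Fin m → ℝ)) := by
  intro m
  induction m with
  | zero =>
    intro l hl f g h hf hg hh hyp
    have hvol : (volume : Measure (Fin 0 → ℝ)) = Measure.dirac (fun i => isEmptyElim i) := by
      rw [MeasureTheory.volume_pi]
      exact Measure.pi_of_empty _ _
    rw [hvol, lintegral_dirac' _ hf, lintegral_dirac' _ hg, lintegral_dirac' _ hh]
    have e : ((fun i => isEmptyElim i : Fin 0 → ℝ))
        = (1 - l) • (fun i => isEmptyElim i : Fin 0 → ℝ)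
          + l • (fun i => isEmptyElim i : Fin 0 → ℝ) := Subsingleton.elim _ _
    calc f (fun i => isEmptyElim i) ^ (1 - l) * g (fun i => isEmptyElim i) ^ l
        ≤ h ((1 - l) • (fun i => isEmptyElim i : Fin 0 → ℝ)
            + l • (fun i => isEmptyElim i : Fin 0 → ℝ)) := hyp _ _
      _ = h (fun i => isEmptyElim i) := by rw [← e]
  | succ m ih =>
    intro l hl f g h hf hg hh hyp
    set e := MeasurableEquiv.piFinSuccAbove (fun _ : Fin (m + 1) => ℝ) 0 with hedef
    have mp : MeasurePreserving e (volume : Measure (Fin (m + 1) → ℝ))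
        ((volume : Measure ℝ).prod (volume : Measure (Fin m → ℝ))) := by
      have := MeasureTheory.measurePreserving_piFinSuccAbove
        (fun _ : Fin (m + 1) => (volume : Measure ℝ)) 0
      rw [MeasureTheory.volume_pi]
      exact this
    -- linearity of e
    have elin : ∀ x y : Fin (m + 1) → ℝ,
        e ((1 - l) • x + l • y) = (1 - l) • e x + l • e y := by
      intro x y
      rfl
    have elinsymm : ∀ z w : ℝ × (Fin m → ℝ),
        e.symm ((1 - l) • z + l • w) = (1 - l) • e.symm z + l • e.symm w := by
      intro z w
      apply e.injective
      rw [elin, e.apply_symm_apply, e.apply_symm_apply, e.apply_symm_apply]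
    have hplprod : IsPLGood ((volume : Measure ℝ).prod (volume : Measure (Fin m → ℝ))) :=
      isPLGood_prod isPLGood_real ih
    have key := hplprod l hl (f ∘ e.symm) (g ∘ e.symm) (h ∘ e.symm)
      (hf.comp e.symm.measurable) (hg.comp e.symm.measurable) (hh.comp e.symm.measurable)
      (by
        intro z w
        simp only [Function.comp_apply]
        rw [elinsymm]
        exact hyp (e.symm z) (e.symm w))
    have transfer : ∀ φ : (Fin (m + 1) → ℝ) → ℝ≥0∞, Measurable φ →
        (∫⁻ z, (φ ∘ e.symm) z ∂((volume : Measure ℝ).prod (volume : Measure (Fin m → ℝ))))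
          = ∫⁻ x, φ x := by
      intro φ hφ
      rw [← mp.lintegral_comp (hφ.comp e.symm.measurable)]
      congr 1
      funext x
      simp
    rw [transfer f hf, transfer g hg, transfer h hh] at key
    exact key

/-- (Prékopa) The marginal of a jointly log-concave integrable nonnegative
function on ℝⁿ × ℝᵐ is log-concave. -/
theorem prekopa_marginal {n m : ℕ}
    (ρ : (Fin n → ℝ) × (Fin m → ℝ) → ℝ)
    (hρ0 : ∀ z, 0 ≤ ρ z) (hρm : Measurable ρ)
    (hρint : ∀ x : Fin n → ℝ, Integrable (fun y => ρ (x, y)) volume)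
    (hρlc : ∀ z z' : (Fin n → ℝ) × (Fin m → ℝ), ∀ p ∈ Icc (0:ℝ) 1,
      ρ (p • z + (1 - p) • z') ≥ ρ z ^ p * ρ z' ^ (1 - p)) :
    ∀ x x' : Fin n → ℝ, ∀ p ∈ Icc (0:ℝ) 1,
      (∫ y, ρ (p • x + (1 - p) • x', y)) ≥
        (∫ y, ρ (x, y)) ^ p * (∫ y, ρ (x', y)) ^ (1 - p) := by
  intro x x' p hp
  obtain ⟨hp0, hp1⟩ := hp
  rcases eq_or_lt_of_le hp0 with h0 | hp0'
  · rw [← h0]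
    simp [Real.rpow_zero, Real.rpow_one]
  rcases eq_or_lt_of_le hp1 with h1 | hp1'
  · rw [h1]
    simp [Real.rpow_zero, Real.rpow_one]
  -- main case : 0 < p < 1
  set x'' : Fin n → ℝ := p • x + (1 - p) • x' with hx''
  set l : ℝ := 1 - p with hldef
  have hll : 1 - l = p := by rw [hldef]; ring
  have hlIoo : l ∈ Ioo (0:ℝ) 1 := ⟨by rw [hldef]; linarith, by rw [hldef]; linarith⟩
  set Ff : (Fin m → ℝ) → ℝ≥0∞ := fun y => ENNReal.ofReal (ρ (x, y)) with hFf
  set Gg : (Fin m → ℝ) → ℝ≥0∞ := fun y => ENNReal.ofReal (ρ (x', y)) with hGg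
  set Hh : (Fin m → ℝ) → ℝ≥0∞ := fun y => ENNReal.ofReal (ρ (x'', y)) with hHh
  have hFfm : Measurable Ff :=
    ENNReal.measurable_ofReal.comp (hρm.comp measurable_prodMk_left)
  have hGgm : Measurable Gg :=
    ENNReal.measurable_ofReal.comp (hρm.comp measurable_prodMk_left)
  have hHhm : Measurable Hh :=
    ENNReal.measurable_ofReal.comp (hρm.comp measurable_prodMk_left)
  have hyp : ∀ y y' : Fin m → ℝ,
      Ff y ^ (1 - l) * Gg y' ^ l ≤ Hh ((1 - l) • y + l • y') := by
    intro y y'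
    rw [hll]
    have harg : (x'', p • y + (1 - p) • y')
        = p • ((x, y) : (Fin n → ℝ) × (Fin m → ℝ)) + (1 - p) • ((x', y')) := rfl
    have hlc := hρlc (x, y) (x', y') p ⟨hp0, hp1⟩
    rw [← harg] at hlc
    calc Ff y ^ p * Gg y' ^ l
        = ENNReal.ofReal (ρ (x, y) ^ p * ρ (x', y') ^ (1 - p)) := by
          rw [hFf, hGg, hldef]
          simp only
          rw [ENNReal.ofReal_rpow_of_nonneg (hρ0 _) hp0,
            ENNReal.ofReal_rpow_of_nonneg (hρ0 _) (by linarith),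
            ENNReal.ofReal_mul (Real.rpow_nonneg (hρ0 _) _)]
      _ ≤ Hh (p • y + (1 - p) • y') := ENNReal.ofReal_le_ofReal hlc
  have key := isPLGood_pi m l hlIoo Ff Gg Hh hFfm hGgm hHhm hyp
  rw [hll] at key
  -- convert Bochner integrals to lintegrals
  have conv : ∀ c : Fin n → ℝ,
      (∫ y, ρ (c, y)) = (∫⁻ y, ENNReal.ofReal (ρ (c, y))).toReal := by
    intro c
    rw [integral_eq_lintegral_of_nonneg_ae (Filter.Eventually.of_forall fun y => hρ0 _)
      (hρm.comp measurable_prodMk_left).aestronglyMeasurable]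
  have hfin : ∀ c : Fin n → ℝ, (∫⁻ y, ENNReal.ofReal (ρ (c, y))) ≠ ⊤ := by
    intro c
    have h1 := (hρint c).hasFiniteIntegral
    rw [hasFiniteIntegral_iff_ofReal (Filter.Eventually.of_forall fun y => hρ0 _)] at h1
    exact h1.ne
  rw [ge_iff_le, conv x, conv x', conv x'']
  calc (∫⁻ y, ENNReal.ofReal (ρ (x, y))).toReal ^ p
        * (∫⁻ y, ENNReal.ofReal (ρ (x', y))).toReal ^ (1 - p)
      = ((∫⁻ y, ENNReal.ofReal (ρ (x, y))) ^ p
        * (∫⁻ y, ENNReal.ofReal (ρ (x', y))) ^ (1 - p)).toReal := by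
        rw [ENNReal.toReal_mul, ENNReal.toReal_rpow, ENNReal.toReal_rpow]
    _ ≤ (∫⁻ y, ENNReal.ofReal (ρ (x'', y))).toReal :=
        ENNReal.toReal_mono (hfin x'') key
end
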